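/- Let k, t, p ≥ 1 be integers with t ≤ k, and let n = kp. Then: (a) there exists an (n−k)×n (0,1)-matrix A all of whose row sums equal tp and all of whose column sums equal t(p−1); and (b) for any such A, the n×n matrix V = (1/(tp)) · [B; A], where B is the k×n matrix consisting of p copies of t·I_k placed side by side (so the first k rows of tp·V are [tI_k tI_k ⋯ tI_k]) and the last n−k rows of tp·V equal A, is an RCDS doubly stochastic matrix. -/

import Mathlib

open Finset

open Fin.NatCast in
lemma block1 (k t : ℕ) (hk : 0 < k) (htk : t ≤ k) (c : ℕ) :
    ∑ x ∈ Finset.range k, (if (x + c) % k < t then (1:ℝ) else 0) = t := by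
  obtain ⟨k', rfl⟩ : ∃ k', k = k' + 1 := ⟨k - 1, by omega⟩
  have h1 : ∀ x : Fin (k' + 1),
      ((x + (c : Fin (k' + 1)) : Fin (k' + 1)) : ℕ) = ((x : ℕ) + c) % (k' + 1) := by
    intro x
    rw [Fin.val_add, Fin.val_natCast, Nat.add_mod (x : ℕ) c, Nat.mod_eq_of_lt x.isLt]
  have hfilter : (Finset.range (k' + 1)).filter (fun x => x < t) = Finset.range t := by
    ext x; simp only [mem_filter, mem_range]; omega
  calc ∑ x ∈ Finset.range (k' + 1), (if (x + c) % (k' + 1) < t then (1:ℝ) else 0)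
      = ∑ x : Fin (k' + 1), (if ((x : ℕ) + c) % (k' + 1) < t then (1:ℝ) else 0) :=
        (Fin.sum_univ_eq_sum_range (fun x => if (x + c) % (k' + 1) < t then (1:ℝ) else 0) _).symm
    _ = ∑ x : Fin (k' + 1), (if ((x + (c : Fin (k' + 1)) : Fin (k' + 1)) : ℕ) < t
          then (1:ℝ) else 0) := Finset.sum_congr rfl fun x _ => by rw [h1]
    _ = ∑ y : Fin (k' + 1), (if (y : ℕ) < t then (1:ℝ) else 0) :=
        Fintype.sum_bijective (· + (c : Fin (k' + 1)))
          (Equiv.addRight (c : Fin (k' + 1))).bijective _ _ (fun x => rfl)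
    _ = ∑ x ∈ Finset.range (k' + 1), (if x < t then (1:ℝ) else 0) :=
        Fin.sum_univ_eq_sum_range (fun x => if x < t then (1:ℝ) else 0) _
    _ = (t : ℝ) := by rw [Finset.sum_boole, hfilter, Finset.card_range]

lemma blocks1 (k t : ℕ) (hk : 0 < k) (htk : t ≤ k) (q c : ℕ) :
    ∑ x ∈ Finset.range (k * q), (if (x + c) % k < t then (1:ℝ) else 0) = t * q := by
  induction q with
  | zero => simp
  | succ q ih =>
    rw [Nat.mul_succ, Finset.sum_range_add, ih]
    have h2 : ∑ x ∈ Finset.range k, (if (k * q + x + c) % k < t then (1:ℝ) else 0)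
        = ∑ x ∈ Finset.range k, (if (x + c) % k < t then (1:ℝ) else 0) := by
      refine Finset.sum_congr rfl fun x _ => ?_
      rw [Nat.add_assoc, Nat.mul_add_mod]
    rw [h2, block1 k t hk htk c]
    push_cast; ring

lemma blocksEq (k : ℕ) (hk : 0 < k) (q c : ℕ) (hc : c < k) (r : ℝ) :
    ∑ x ∈ Finset.range (k * q), (if x % k = c then r else 0) = q * r := by
  induction q with
  | zero => simp
  | succ q ih =>
    rw [Nat.mul_succ, Finset.sum_range_add, ih]
    have h2 : ∑ x ∈ Finset.range k, (if (k * q + x) % k = c then r else 0)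
        = ∑ x ∈ Finset.range k, (if x = c then r else 0) := by
      refine Finset.sum_congr rfl fun x hx => ?_
      rw [Nat.mul_add_mod, Nat.mod_eq_of_lt (Finset.mem_range.mp hx)]
    rw [h2, Finset.sum_ite_eq' (Finset.range k) c (fun _ => r),
      if_pos (Finset.mem_range.mpr hc)]
    push_cast; ring



/-- `X` is doubly stochastic: nonnegative entries and all row and column sums equal 1. -/
def DoublyStochastic {n : ℕ} (X : Matrix (Fin n) (Fin n) ℝ) : Prop :=
  (∀ i j, 0 ≤ X i j) ∧ (∀ i, ∑ j, X i j = 1) ∧ (∀ j, ∑ i, X i j = 1)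

/-- `X` has restricted constant diagonal sums. -/
def RCDS {n : ℕ} (X : Matrix (Fin n) (Fin n) ℝ) : Prop :=
  ∀ σ τ : Equiv.Perm (Fin n), (∀ i, 0 < X i (σ i)) → (∀ i, 0 < X i (τ i)) →
    ∑ i, X i (σ i) = ∑ i, X i (τ i)

/-- For integers `1 ≤ t ≤ k`, `p ≥ 1`, `n = kp`: (a) there is an `(n-k) × n`
(0,1)-matrix `A` with all row sums `tp` and all column sums `t(p-1)`; and (b) for
any such `A`, the matrix `V = (1/(tp))·[tI_k tI_k ⋯ tI_k ; A]` is an RCDS doubly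
stochastic matrix. Here the first `k` rows of `tp·V` consist of `p` copies of
`t·I_k` side by side (entry `t` in row `i < k`, column `j` iff `j % k = i`), and
the last `n-k` rows of `tp·V` equal `A`. -/
theorem rcds_class_block (k t p : ℕ) (hk : 1 ≤ k) (ht : 1 ≤ t) (hp : 1 ≤ p)
    (htk : t ≤ k) (n : ℕ) (hn : n = k * p) :
    (∃ A : Matrix (Fin (n - k)) (Fin n) ℝ,
        (∀ i j, A i j = 0 ∨ A i j = 1) ∧
        (∀ i, ∑ j, A i j = (t : ℝ) * (p : ℝ)) ∧
        (∀ j, ∑ i, A i j = (t : ℝ) * ((p : ℝ) - 1))) ∧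
    (∀ A : Matrix (Fin (n - k)) (Fin n) ℝ,
        (∀ i j, A i j = 0 ∨ A i j = 1) →
        (∀ i, ∑ j, A i j = (t : ℝ) * (p : ℝ)) →
        (∀ j, ∑ i, A i j = (t : ℝ) * ((p : ℝ) - 1)) →
        ∀ V : Matrix (Fin n) (Fin n) ℝ,
          (∀ i j : Fin n, (i : ℕ) < k →
              V i j = (if (j : ℕ) % k = (i : ℕ) then (t : ℝ) else 0) / ((t : ℝ) * (p : ℝ))) →
          (∀ (i : Fin (n - k)) (j : Fin n),
              V ⟨k + (i : ℕ), by have := i.isLt; omega⟩ j = A i j / ((t : ℝ) * (p : ℝ))) →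
          DoublyStochastic V ∧ RCDS V) := by
  subst hn
  have hkpos : 0 < k := hk
  have hkp : k * p = k * (p - 1) + k := by
    have h : k * (p - 1 + 1) = k * (p - 1) + k * 1 := Nat.mul_add k (p - 1) 1
    have hp1 : p - 1 + 1 = p := by omega
    rw [hp1] at h; omega
  have hnk : k * p - k = k * (p - 1) := by omega
  have htpos : (0:ℝ) < (t:ℝ) := by exact_mod_cast ht
  have hppos : (0:ℝ) < (p:ℝ) := by exact_mod_cast hp
  have hT : (0:ℝ) < (t:ℝ) * (p:ℝ) := mul_pos htpos hppos
  constructor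
  · refine ⟨fun i j => if ((i:ℕ) + (j:ℕ)) % k < t then 1 else 0,
      fun i j => ?_, fun i => ?_, fun j => ?_⟩
    · by_cases h : ((i:ℕ) + (j:ℕ)) % k < t <;> simp [h]
    · calc ∑ j : Fin (k*p), (if ((i:ℕ) + (j:ℕ)) % k < t then (1:ℝ) else 0)
          = ∑ j : Fin (k*p), (if ((j:ℕ) + (i:ℕ)) % k < t then (1:ℝ) else 0) :=
            Finset.sum_congr rfl fun j _ => by rw [Nat.add_comm]
        _ = ∑ x ∈ Finset.range (k*p), (if (x + (i:ℕ)) % k < t then (1:ℝ) else 0) :=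
            Fin.sum_univ_eq_sum_range (fun x => if (x + (i:ℕ)) % k < t then (1:ℝ) else 0) _
        _ = (t:ℝ) * (p:ℝ) := blocks1 k t hkpos htk p (i:ℕ)
    · calc ∑ i : Fin (k*p - k), (if ((i:ℕ) + (j:ℕ)) % k < t then (1:ℝ) else 0)
          = ∑ x ∈ Finset.range (k*p - k), (if (x + (j:ℕ)) % k < t then (1:ℝ) else 0) :=
            Fin.sum_univ_eq_sum_range (fun x => if (x + (j:ℕ)) % k < t then (1:ℝ) else 0) _
        _ = ∑ x ∈ Finset.range (k*(p-1)), (if (x + (j:ℕ)) % k < t then (1:ℝ) else 0) := by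
            rw [hnk]
        _ = (t:ℝ) * ((p-1:ℕ):ℝ) := blocks1 k t hkpos htk (p-1) (j:ℕ)
        _ = (t:ℝ) * ((p:ℝ) - 1) := by rw [Nat.cast_sub hp]; norm_num
  · rintro A hA01 hA2 hA3 V hVB hVA
    have hVA' : ∀ (i : Fin (k*p)) (hi : k ≤ (i:ℕ)) (j : Fin (k*p)),
        V i j = A ⟨(i:ℕ) - k, by have := i.isLt; omega⟩ j / ((t:ℝ) * (p:ℝ)) := by
      intro i hi j
      have h2 : i = ⟨k + ((i:ℕ) - k), by have := i.isLt; omega⟩ := by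
        apply Fin.ext; simp; omega
      conv_lhs => rw [h2]
      exact hVA ⟨(i:ℕ) - k, by have := i.isLt; omega⟩ j
    have hsplit : k * p = k + (k * p - k) := by omega
    have e1 : ∀ j : Fin (k*p),
        ∑ i : Fin k, (if (j:ℕ) % k = (i:ℕ) then (t:ℝ) else 0) = t := by
      intro j
      have hjk : (j:ℕ) % k < k := Nat.mod_lt _ hkpos
      have h2 : ∀ i : Fin k, (if (j:ℕ) % k = (i:ℕ) then (t:ℝ) else 0)
          = (if (⟨(j:ℕ) % k, hjk⟩ : Fin k) = i then (t:ℝ) else 0) := by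
        intro i
        by_cases h : (⟨(j:ℕ) % k, hjk⟩ : Fin k) = i
        · rw [if_pos h, if_pos (congrArg Fin.val h)]
        · rw [if_neg (fun hh => h (Fin.ext hh)), if_neg h]
      rw [Finset.sum_congr rfl (fun i _ => h2 i), Fintype.sum_ite_eq]
    have key : ∀ ρ : Equiv.Perm (Fin (k*p)), (∀ i, 0 < V i (ρ i)) →
        ∑ i, V i (ρ i) = ∑ i : Fin (k*p),
          (if (i:ℕ) < k then (t:ℝ) / ((t:ℝ)*(p:ℝ)) else 1 / ((t:ℝ)*(p:ℝ))) := by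
      intro ρ hρ
      refine Finset.sum_congr rfl fun i _ => ?_
      by_cases hi : (i:ℕ) < k
      · rw [if_pos hi]
        have h := hρ i
        rw [hVB i (ρ i) hi] at h ⊢
        by_cases hcond : ((ρ i : Fin (k*p)) : ℕ) % k = (i:ℕ)
        · rw [if_pos hcond]
        · rw [if_neg hcond] at h; simp at h
      · push_neg at hi
        rw [if_neg (by omega)]
        have h := hρ i
        rw [hVA' i hi (ρ i)] at h ⊢
        rcases hA01 ⟨(i:ℕ) - k, by have := i.isLt; omega⟩ (ρ i) with h0 | h1
        · rw [h0] at h; simp at h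
        · rw [h1]
    refine ⟨⟨?_, ?_, ?_⟩, ?_⟩
    · -- nonneg
      intro i j
      by_cases hi : (i:ℕ) < k
      · rw [hVB i j hi]
        apply div_nonneg _ hT.le
        split_ifs
        · exact htpos.le
        · exact le_refl 0
      · push_neg at hi
        rw [hVA' i hi j]
        apply div_nonneg _ hT.le
        rcases hA01 ⟨(i:ℕ) - k, by have := i.isLt; omega⟩ j with h | h <;> rw [h] <;> norm_num
    · -- row sums
      intro i
      by_cases hi : (i:ℕ) < k
      · have h1 : ∑ j, V i j
            = (∑ j : Fin (k*p), if (j:ℕ) % k = (i:ℕ) then (t:ℝ) else 0) / ((t:ℝ)*(p:ℝ)) := by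
          rw [Finset.sum_div]
          exact Finset.sum_congr rfl fun j _ => hVB i j hi
        rw [h1, Fin.sum_univ_eq_sum_range (fun x => if x % k = (i:ℕ) then (t:ℝ) else 0) (k*p),
          blocksEq k hkpos p (i:ℕ) hi (t:ℝ)]
        rw [div_eq_one_iff_eq hT.ne']; ring
      · push_neg at hi
        have h1 : ∑ j, V i j
            = (∑ j, A ⟨(i:ℕ) - k, by have := i.isLt; omega⟩ j) / ((t:ℝ)*(p:ℝ)) := by
          rw [Finset.sum_div]
          exact Finset.sum_congr rfl fun j _ => hVA' i hi j
        rw [h1, hA2]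
        exact div_self hT.ne'
    · -- column sums
      intro j
      calc ∑ i, V i j
          = ∑ i : Fin (k + (k*p - k)), V (finCongr hsplit.symm i) j :=
            (Fintype.sum_equiv (finCongr hsplit.symm)
              (fun i => V (finCongr hsplit.symm i) j) (fun i => V i j) (fun _ => rfl)).symm
        _ = (∑ i : Fin k, V (finCongr hsplit.symm (Fin.castAdd (k*p - k) i)) j)
            + ∑ i : Fin (k*p - k), V (finCongr hsplit.symm (Fin.natAdd k i)) j :=
            Fin.sum_univ_add _
        _ = (∑ i : Fin k, (if (j:ℕ) % k = (i:ℕ) then (t:ℝ) else 0) / ((t:ℝ)*(p:ℝ)))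
            + ∑ i : Fin (k*p - k), A i j / ((t:ℝ)*(p:ℝ)) := by
            congr 1
            · refine Finset.sum_congr rfl fun i _ => ?_
              rw [hVB _ j (by simpa using i.isLt)]
              simp
            · refine Finset.sum_congr rfl fun i _ => ?_
              rw [hVA' _ (by simp only [finCongr_apply, Fin.coe_cast, Fin.coe_natAdd]; omega) j]
              congr 1
              exact congrFun (congrArg A (Fin.ext (by simp))) j
        _ = (∑ i : Fin k, if (j:ℕ) % k = (i:ℕ) then (t:ℝ) else 0) / ((t:ℝ)*(p:ℝ))
            + (∑ i : Fin (k*p - k), A i j) / ((t:ℝ)*(p:ℝ)) := by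
            rw [Finset.sum_div, Finset.sum_div]
        _ = 1 := by
            rw [e1 j, hA3 j, ← add_div,
              show (t:ℝ) + (t:ℝ) * ((p:ℝ) - 1) = (t:ℝ) * (p:ℝ) by ring]
            exact div_self hT.ne'
    · -- RCDS
      intro σ τ hσ hτ
      rw [key σ hσ, key τ hτ]
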